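/- Let R be a ring and A an additive subgroup of R. Then the additive subgroup generated by all commutators [a, x] with a in A, x in R equals the additive subgroup generated by all commutators [s, x] with s in the subring generated by A and x in R. -/
import Mathlib

/-- The additive subgroup generated by commutators `a*b - b*a` with `a ∈ A`, `b ∈ B`. -/
def commSG (R : Type*) [NonUnitalRing R] (A B : Set R) : AddSubgroup R :=
  AddSubgroup.closure {x | ∃ a ∈ A, ∃ b ∈ B, x = a * b - b * a}

/-- The additive subgroup generated by products `a*b` with `a ∈ A`, `b ∈ B`. -/
def prodSG (R : Type*) [NonUnitalRing R] (A B : Set R) : AddSubgroup R :=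
  AddSubgroup.closure {x | ∃ a ∈ A, ∃ b ∈ B, x = a * b}

/-- `L` is a Lie ideal of `R`. -/
def IsLieIdeal (R : Type*) [NonUnitalRing R] (L : AddSubgroup R) : Prop :=
  ∀ a ∈ L, ∀ r : R, a * r - r * a ∈ L

/-- `sgPow R L n` is the additive subgroup `L^(n+1)` generated by products of `n+1`
elements of `L`. -/
def sgPow (R : Type*) [NonUnitalRing R] (L : AddSubgroup R) : ℕ → AddSubgroup R
  | 0 => L
  | n + 1 => prodSG R (sgPow R L n) L

/-- `R` is a semiprime ring. -/
def IsSemiprimeRing (R : Type*) [NonUnitalRing R] : Prop :=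
  ∀ a : R, (∀ x : R, a * x * a = 0) → a = 0

/-- `R` is a prime ring. -/
def IsPrimeRing (R : Type*) [NonUnitalRing R] : Prop :=
  ∀ a b : R, (∀ x : R, a * x * b = 0) → a = 0 ∨ b = 0

/-- For an additive subgroup A of a (not necessarily unital) ring R,
`[A, R] = [\overline A, R]` where `\overline A` is the subring generated by A. -/
theorem stmt0 (R : Type*) [NonUnitalRing R] (A : AddSubgroup R) :
    commSG R (A : Set R) Set.univ
      = commSG R ((NonUnitalSubring.closure (A : Set R) : NonUnitalSubring R) : Set R)
          Set.univ := by
  apply le_antisymm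
  · apply AddSubgroup.closure_mono
    rintro x ⟨a, ha, b, hb, rfl⟩
    exact ⟨a, NonUnitalSubring.subset_closure ha, b, hb, rfl⟩
  · rw [commSG, AddSubgroup.closure_le]
    rintro x ⟨s, hs, b, -, rfl⟩
    revert b
    induction hs using NonUnitalSubring.closure_induction with
    | mem a ha => exact fun b => AddSubgroup.subset_closure ⟨a, ha, b, trivial, rfl⟩
    | zero => intro b; simpa using (commSG R (A : Set R) Set.univ).zero_mem
    | add x y hx hy px py =>
      intro b
      have : (x + y) * b - b * (x + y) = (x * b - b * x) + (y * b - b * y) := by noncomm_ring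
      rw [this]; exact add_mem (px b) (py b)
    | neg x hx px =>
      intro b
      have : (-x) * b - b * (-x) = -(x * b - b * x) := by noncomm_ring
      rw [this]; exact neg_mem (px b)
    | mul x y hx hy px py =>
      intro b
      have : (x * y) * b - b * (x * y) = (x * (y * b) - (y * b) * x) + (y * (b * x) - (b * x) * y) := by noncomm_ring
      rw [this]; exact add_mem (px (y * b)) (py (b * x))
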